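/- Let V be the 20-dimensional ℂ-vector space of homogeneous degree-3 polynomials in x₀,x₁,x₂,x₃. Let S ⊆ V be the span of the 16 polynomials xᵢ·∂F/∂xⱼ for i,j ∈ {0,1,2,3}, and let W ⊆ V be the span of the six monomials x₀³, x₁³, x₂³, x₀²x₃, x₁²x₃, x₂²x₃. Then V is the internal direct sum S ⊕ W; in particular S has dimension 14 (the only linear relations among the 16 polynomials xᵢ·∂F/∂xⱼ are x₀·∂F/∂x₀ = x₁·∂F/∂x₁ = x₂·∂F/∂x₂) and W is a 6-dimensional complement, the Luna slice normal to the orbit of the 3A₂ cubic. -/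

import Mathlib

open MvPolynomial

/-- The defining cubic form of the 3A₂ cubic surface: F = x₀x₁x₂ + x₃³. -/
noncomputable def F3A2 : MvPolynomial (Fin 4) ℂ :=
  X 0 * X 1 * X 2 + X 3 ^ 3

/-- The span of the 16 polynomials xᵢ·∂F/∂xⱼ, the tangent space to the orbit of the
3A₂ cubic. -/
noncomputable def orbitTangent : Submodule ℂ (MvPolynomial (Fin 4) ℂ) :=
  Submodule.span ℂ {P | ∃ i j : Fin 4, P = X i * MvPolynomial.pderiv j F3A2}

/-- The span of the six monomials x₀³, x₁³, x₂³, x₀²x₃, x₁²x₃, x₂²x₃: the Luna slice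
normal to the orbit of the 3A₂ cubic. -/
noncomputable def lunaSlice : Submodule ℂ (MvPolynomial (Fin 4) ℂ) :=
  Submodule.span ℂ
    ({X 0 ^ 3, X 1 ^ 3, X 2 ^ 3, X 0 ^ 2 * X 3, X 1 ^ 2 * X 3, X 2 ^ 2 * X 3} :
      Set (MvPolynomial (Fin 4) ℂ))

/- ## Auxiliary: the 20 cubic monomials -/

def e20 : Fin 20 → Fin 4 → ℕ :=
  ![![2,1,0,0], ![2,0,1,0], ![1,2,0,0], ![0,2,1,0], ![1,0,2,0], ![0,1,2,0],
    ![1,1,1,0], ![1,1,0,1], ![1,0,1,1], ![0,1,1,1], ![1,0,0,2], ![0,1,0,2],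
    ![0,0,1,2], ![0,0,0,3], ![3,0,0,0], ![0,3,0,0], ![0,0,3,0], ![2,0,0,1],
    ![0,2,0,1], ![0,0,2,1]]

noncomputable def v20 : Fin 20 → MvPolynomial (Fin 4) ℂ :=
  fun i => monomial (Finsupp.equivFunOnFinite.symm (e20 i)) 1

lemma monomial_prod (g : Fin 4 → ℕ) :
    (monomial (Finsupp.equivFunOnFinite.symm g) (1:ℂ)) =
      X 0 ^ g 0 * X 1 ^ g 1 * X 2 ^ g 2 * X 3 ^ g 3 := by
  have hd : Finsupp.equivFunOnFinite.symm g =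
      Finsupp.single 0 (g 0) + Finsupp.single 1 (g 1) + Finsupp.single 2 (g 2)
        + Finsupp.single 3 (g 3) := by
    ext a; fin_cases a <;> simp [Finsupp.single_apply]
  rw [X_pow_eq_monomial, X_pow_eq_monomial, X_pow_eq_monomial, X_pow_eq_monomial,
    monomial_mul, monomial_mul, monomial_mul, one_mul, one_mul, one_mul, hd]

lemma v20_raw (i : Fin 20) :
    v20 i = X 0 ^ e20 i 0 * X 1 ^ e20 i 1 * X 2 ^ e20 i 2 * X 3 ^ e20 i 3 :=
  monomial_prod (e20 i)

lemma v20_eq (k : Fin 20) {g : Fin 4 → ℕ} (h : e20 k = g) :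
    v20 k = X 0 ^ g 0 * X 1 ^ g 1 * X 2 ^ g 2 * X 3 ^ g 3 := by rw [v20_raw, h]

lemma e20_inj : Function.Injective e20 := by decide

lemma v20_li : LinearIndependent ℂ v20 := by
  have h := (basisMonomials (Fin 4) ℂ).linearIndependent
  have hv : v20 = (basisMonomials (Fin 4) ℂ) ∘
      (fun i => Finsupp.equivFunOnFinite.symm (e20 i)) := by
    funext i; simp [v20, coe_basisMonomials]
  rw [hv]
  exact h.comp _ (Finsupp.equivFunOnFinite.symm.injective.comp e20_inj)

/- reduced forms -/
lemma hv0 : v20 0 = X 0 ^ 2 * X 1 := by rw [v20_eq 0 (g := ![2,1,0,0]) rfl]; norm_num [Matrix.cons_val_two, Matrix.cons_val_three]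
lemma hv1 : v20 1 = X 0 ^ 2 * X 2 := by rw [v20_eq 1 (g := ![2,0,1,0]) rfl]; norm_num [Matrix.cons_val_two, Matrix.cons_val_three]
lemma hv2 : v20 2 = X 0 * X 1 ^ 2 := by rw [v20_eq 2 (g := ![1,2,0,0]) rfl]; norm_num [Matrix.cons_val_two, Matrix.cons_val_three]
lemma hv3 : v20 3 = X 1 ^ 2 * X 2 := by rw [v20_eq 3 (g := ![0,2,1,0]) rfl]; norm_num [Matrix.cons_val_two, Matrix.cons_val_three]
lemma hv4 : v20 4 = X 0 * X 2 ^ 2 := by rw [v20_eq 4 (g := ![1,0,2,0]) rfl]; norm_num [Matrix.cons_val_two, Matrix.cons_val_three]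
lemma hv5 : v20 5 = X 1 * X 2 ^ 2 := by rw [v20_eq 5 (g := ![0,1,2,0]) rfl]; norm_num [Matrix.cons_val_two, Matrix.cons_val_three]
lemma hv6 : v20 6 = X 0 * X 1 * X 2 := by rw [v20_eq 6 (g := ![1,1,1,0]) rfl]; norm_num [Matrix.cons_val_two, Matrix.cons_val_three]
lemma hv7 : v20 7 = X 0 * X 1 * X 3 := by rw [v20_eq 7 (g := ![1,1,0,1]) rfl]; norm_num [Matrix.cons_val_two, Matrix.cons_val_three]
lemma hv8 : v20 8 = X 0 * X 2 * X 3 := by rw [v20_eq 8 (g := ![1,0,1,1]) rfl]; norm_num [Matrix.cons_val_two, Matrix.cons_val_three]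
lemma hv9 : v20 9 = X 1 * X 2 * X 3 := by rw [v20_eq 9 (g := ![0,1,1,1]) rfl]; norm_num [Matrix.cons_val_two, Matrix.cons_val_three]
lemma hv10 : v20 10 = X 0 * X 3 ^ 2 := by rw [v20_eq 10 (g := ![1,0,0,2]) rfl]; norm_num [Matrix.cons_val_two, Matrix.cons_val_three]
lemma hv11 : v20 11 = X 1 * X 3 ^ 2 := by rw [v20_eq 11 (g := ![0,1,0,2]) rfl]; norm_num [Matrix.cons_val_two, Matrix.cons_val_three]
lemma hv12 : v20 12 = X 2 * X 3 ^ 2 := by rw [v20_eq 12 (g := ![0,0,1,2]) rfl]; norm_num [Matrix.cons_val_two, Matrix.cons_val_three]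
lemma hv13 : v20 13 = X 3 ^ 3 := by rw [v20_eq 13 (g := ![0,0,0,3]) rfl]; norm_num [Matrix.cons_val_two, Matrix.cons_val_three]
lemma hv14 : v20 14 = X 0 ^ 3 := by rw [v20_eq 14 (g := ![3,0,0,0]) rfl]; norm_num [Matrix.cons_val_two, Matrix.cons_val_three]
lemma hv15 : v20 15 = X 1 ^ 3 := by rw [v20_eq 15 (g := ![0,3,0,0]) rfl]; norm_num [Matrix.cons_val_two, Matrix.cons_val_three]
lemma hv16 : v20 16 = X 2 ^ 3 := by rw [v20_eq 16 (g := ![0,0,3,0]) rfl]; norm_num [Matrix.cons_val_two, Matrix.cons_val_three]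
lemma hv17 : v20 17 = X 0 ^ 2 * X 3 := by rw [v20_eq 17 (g := ![2,0,0,1]) rfl]; norm_num [Matrix.cons_val_two, Matrix.cons_val_three]
lemma hv18 : v20 18 = X 1 ^ 2 * X 3 := by rw [v20_eq 18 (g := ![0,2,0,1]) rfl]; norm_num [Matrix.cons_val_two, Matrix.cons_val_three]
lemma hv19 : v20 19 = X 2 ^ 2 * X 3 := by rw [v20_eq 19 (g := ![0,0,2,1]) rfl]; norm_num [Matrix.cons_val_two, Matrix.cons_val_three]

/- partial derivatives of F -/
lemma hp0 : pderiv 0 F3A2 = X 1 * X 2 := by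
  simp [F3A2, pderiv_X_self, pderiv_X_of_ne]; ring
lemma hp1 : pderiv 1 F3A2 = X 0 * X 2 := by
  simp [F3A2, pderiv_X_self, pderiv_X_of_ne]; ring
lemma hp2 : pderiv 2 F3A2 = X 0 * X 1 := by
  simp [F3A2, pderiv_X_self, pderiv_X_of_ne]
lemma hp3 : pderiv 3 F3A2 = 3 * X 3 ^ 2 := by
  simp [F3A2, pderiv_X_self, pderiv_X_of_ne]

def sIdx : Set (Fin 20) := {i | (i : ℕ) < 14}
def tIdx : Set (Fin 20) := {i | 14 ≤ (i : ℕ)}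

lemma hS : orbitTangent = Submodule.span ℂ (v20 '' sIdx) := by
  apply le_antisymm
  · rw [orbitTangent, Submodule.span_le]
    rintro P ⟨i, j, rfl⟩
    have mem : ∀ k : Fin 20, (k : ℕ) < 14 → v20 k ∈ Submodule.span ℂ (v20 '' sIdx) :=
      fun k hk => Submodule.subset_span ⟨k, hk, rfl⟩
    fin_cases i <;> fin_cases j
    · exact (show X 0 * pderiv 0 F3A2 ∈ _ from by
          rw [hp0, show X 0 * (X 1 * X 2) = v20 6 from by rw [hv6]; ring]
          exact mem 6 (by decide))
    · exact (show X 0 * pderiv 1 F3A2 ∈ _ from by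
          rw [hp1, show X 0 * (X 0 * X 2) = v20 1 from by rw [hv1]; ring]
          exact mem 1 (by decide))
    · exact (show X 0 * pderiv 2 F3A2 ∈ _ from by
          rw [hp2, show X 0 * (X 0 * X 1) = v20 0 from by rw [hv0]; ring]
          exact mem 0 (by decide))
    · exact (show X 0 * pderiv 3 F3A2 ∈ _ from by
          rw [hp3, show X 0 * (3 * X 3 ^ 2) = v20 10 + v20 10 + v20 10 from by rw [hv10]; ring]
          exact add_mem (add_mem (mem 10 (by decide)) (mem 10 (by decide))) (mem 10 (by decide)))
    · exact (show X 1 * pderiv 0 F3A2 ∈ _ from by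
          rw [hp0, show X 1 * (X 1 * X 2) = v20 3 from by rw [hv3]; ring]
          exact mem 3 (by decide))
    · exact (show X 1 * pderiv 1 F3A2 ∈ _ from by
          rw [hp1, show X 1 * (X 0 * X 2) = v20 6 from by rw [hv6]; ring]
          exact mem 6 (by decide))
    · exact (show X 1 * pderiv 2 F3A2 ∈ _ from by
          rw [hp2, show X 1 * (X 0 * X 1) = v20 2 from by rw [hv2]; ring]
          exact mem 2 (by decide))
    · exact (show X 1 * pderiv 3 F3A2 ∈ _ from by
          rw [hp3, show X 1 * (3 * X 3 ^ 2) = v20 11 + v20 11 + v20 11 from by rw [hv11]; ring]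
          exact add_mem (add_mem (mem 11 (by decide)) (mem 11 (by decide))) (mem 11 (by decide)))
    · exact (show X 2 * pderiv 0 F3A2 ∈ _ from by
          rw [hp0, show X 2 * (X 1 * X 2) = v20 5 from by rw [hv5]; ring]
          exact mem 5 (by decide))
    · exact (show X 2 * pderiv 1 F3A2 ∈ _ from by
          rw [hp1, show X 2 * (X 0 * X 2) = v20 4 from by rw [hv4]; ring]
          exact mem 4 (by decide))
    · exact (show X 2 * pderiv 2 F3A2 ∈ _ from by
          rw [hp2, show X 2 * (X 0 * X 1) = v20 6 from by rw [hv6]; ring]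
          exact mem 6 (by decide))
    · exact (show X 2 * pderiv 3 F3A2 ∈ _ from by
          rw [hp3, show X 2 * (3 * X 3 ^ 2) = v20 12 + v20 12 + v20 12 from by rw [hv12]; ring]
          exact add_mem (add_mem (mem 12 (by decide)) (mem 12 (by decide))) (mem 12 (by decide)))
    · exact (show X 3 * pderiv 0 F3A2 ∈ _ from by
          rw [hp0, show X 3 * (X 1 * X 2) = v20 9 from by rw [hv9]; ring]
          exact mem 9 (by decide))
    · exact (show X 3 * pderiv 1 F3A2 ∈ _ from by
          rw [hp1, show X 3 * (X 0 * X 2) = v20 8 from by rw [hv8]; ring]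
          exact mem 8 (by decide))
    · exact (show X 3 * pderiv 2 F3A2 ∈ _ from by
          rw [hp2, show X 3 * (X 0 * X 1) = v20 7 from by rw [hv7]; ring]
          exact mem 7 (by decide))
    · exact (show X 3 * pderiv 3 F3A2 ∈ _ from by
          rw [hp3, show X 3 * (3 * X 3 ^ 2) = v20 13 + v20 13 + v20 13 from by rw [hv13]; ring]
          exact add_mem (add_mem (mem 13 (by decide)) (mem 13 (by decide))) (mem 13 (by decide)))
  · rw [Submodule.span_le]
    rintro P ⟨i, hi, rfl⟩
    have memG : ∀ a b : Fin 4, X a * pderiv b F3A2 ∈ orbitTangent :=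
      fun a b => Submodule.subset_span ⟨a, b, rfl⟩
    have memG3 : ∀ a : Fin 4, X a * X 3 ^ 2 ∈ orbitTangent := by
      intro a
      have h := Submodule.smul_mem orbitTangent ((3:ℂ)⁻¹) (memG a 3)
      have he : ((3:ℂ)⁻¹) • (X a * pderiv 3 F3A2) = X a * X 3 ^ 2 := by
        rw [hp3, smul_eq_C_mul, (map_ofNat C 3).symm,
          show (X a * (C 3 * X 3 ^ 2) : MvPolynomial (Fin 4) ℂ)
            = C 3 * (X a * X 3 ^ 2) from by ring, ← mul_assoc, ← C_mul]
        norm_num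
      rwa [he] at h
    simp only [sIdx, Set.mem_setOf_eq] at hi
    fin_cases i <;> simp only [SetLike.mem_coe]
    · exact (show v20 0 ∈ orbitTangent from by rw [show v20 0 = X 0 * pderiv 2 F3A2 from by rw [hv0, hp2]; ring]; exact memG 0 2)
    · exact (show v20 1 ∈ orbitTangent from by rw [show v20 1 = X 0 * pderiv 1 F3A2 from by rw [hv1, hp1]; ring]; exact memG 0 1)
    · exact (show v20 2 ∈ orbitTangent from by rw [show v20 2 = X 1 * pderiv 2 F3A2 from by rw [hv2, hp2]; ring]; exact memG 1 2)
    · exact (show v20 3 ∈ orbitTangent from by rw [show v20 3 = X 1 * pderiv 0 F3A2 from by rw [hv3, hp0]; ring]; exact memG 1 0)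
    · exact (show v20 4 ∈ orbitTangent from by rw [show v20 4 = X 2 * pderiv 1 F3A2 from by rw [hv4, hp1]; ring]; exact memG 2 1)
    · exact (show v20 5 ∈ orbitTangent from by rw [show v20 5 = X 2 * pderiv 0 F3A2 from by rw [hv5, hp0]; ring]; exact memG 2 0)
    · exact (show v20 6 ∈ orbitTangent from by rw [show v20 6 = X 0 * pderiv 0 F3A2 from by rw [hv6, hp0]; ring]; exact memG 0 0)
    · exact (show v20 7 ∈ orbitTangent from by rw [show v20 7 = X 3 * pderiv 2 F3A2 from by rw [hv7, hp2]; ring]; exact memG 3 2)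
    · exact (show v20 8 ∈ orbitTangent from by rw [show v20 8 = X 3 * pderiv 1 F3A2 from by rw [hv8, hp1]; ring]; exact memG 3 1)
    · exact (show v20 9 ∈ orbitTangent from by rw [show v20 9 = X 3 * pderiv 0 F3A2 from by rw [hv9, hp0]; ring]; exact memG 3 0)
    · exact (show v20 10 ∈ orbitTangent from by rw [hv10]; exact memG3 0)
    · exact (show v20 11 ∈ orbitTangent from by rw [hv11]; exact memG3 1)
    · exact (show v20 12 ∈ orbitTangent from by rw [hv12]; exact memG3 2)
    · exact (show v20 13 ∈ orbitTangent from by rw [show v20 13 = X 3 * X 3 ^ 2 from by rw [hv13]; ring]; exact memG3 3)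
    · exact absurd hi (by decide)
    · exact absurd hi (by decide)
    · exact absurd hi (by decide)
    · exact absurd hi (by decide)
    · exact absurd hi (by decide)
    · exact absurd hi (by decide)

lemma hW : lunaSlice = Submodule.span ℂ (v20 '' tIdx) := by
  apply le_antisymm
  · rw [lunaSlice, Submodule.span_le]
    intro p hp
    simp only [Set.mem_insert_iff, Set.mem_singleton_iff] at hp
    rcases hp with rfl | rfl | rfl | rfl | rfl | rfl
    · exact Submodule.subset_span ⟨14, by simp only [tIdx, Set.mem_setOf_eq]; decide, hv14⟩
    · exact Submodule.subset_span ⟨15, by simp only [tIdx, Set.mem_setOf_eq]; decide, hv15⟩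
    · exact Submodule.subset_span ⟨16, by simp only [tIdx, Set.mem_setOf_eq]; decide, hv16⟩
    · exact Submodule.subset_span ⟨17, by simp only [tIdx, Set.mem_setOf_eq]; decide, hv17⟩
    · exact Submodule.subset_span ⟨18, by simp only [tIdx, Set.mem_setOf_eq]; decide, hv18⟩
    · exact Submodule.subset_span ⟨19, by simp only [tIdx, Set.mem_setOf_eq]; decide, hv19⟩
  · rw [Submodule.span_le]
    rintro p ⟨i, hi, rfl⟩
    simp only [tIdx, Set.mem_setOf_eq] at hi
    have m0 : (X 0 ^ 3 : MvPolynomial (Fin 4) ℂ) ∈ lunaSlice :=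
      Submodule.subset_span (Set.mem_insert _ _)
    have m1 : (X 1 ^ 3 : MvPolynomial (Fin 4) ℂ) ∈ lunaSlice :=
      Submodule.subset_span (Set.mem_insert_of_mem _ (Set.mem_insert _ _))
    have m2 : (X 2 ^ 3 : MvPolynomial (Fin 4) ℂ) ∈ lunaSlice :=
      Submodule.subset_span (Set.mem_insert_of_mem _ (Set.mem_insert_of_mem _ (Set.mem_insert _ _)))
    have m3 : (X 0 ^ 2 * X 3 : MvPolynomial (Fin 4) ℂ) ∈ lunaSlice :=
      Submodule.subset_span (Set.mem_insert_of_mem _ (Set.mem_insert_of_mem _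
        (Set.mem_insert_of_mem _ (Set.mem_insert _ _))))
    have m4 : (X 1 ^ 2 * X 3 : MvPolynomial (Fin 4) ℂ) ∈ lunaSlice :=
      Submodule.subset_span (Set.mem_insert_of_mem _ (Set.mem_insert_of_mem _
        (Set.mem_insert_of_mem _ (Set.mem_insert_of_mem _ (Set.mem_insert _ _)))))
    have m5 : (X 2 ^ 2 * X 3 : MvPolynomial (Fin 4) ℂ) ∈ lunaSlice :=
      Submodule.subset_span (Set.mem_insert_of_mem _ (Set.mem_insert_of_mem _
        (Set.mem_insert_of_mem _ (Set.mem_insert_of_mem _ (Set.mem_insert_of_mem _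
          rfl)))))
    fin_cases i <;> simp only [SetLike.mem_coe]
    · exact absurd hi (by decide)
    · exact absurd hi (by decide)
    · exact absurd hi (by decide)
    · exact absurd hi (by decide)
    · exact absurd hi (by decide)
    · exact absurd hi (by decide)
    · exact absurd hi (by decide)
    · exact absurd hi (by decide)
    · exact absurd hi (by decide)
    · exact absurd hi (by decide)
    · exact absurd hi (by decide)
    · exact absurd hi (by decide)
    · exact absurd hi (by decide)
    · exact absurd hi (by decide)
    · exact (show v20 14 ∈ lunaSlice from by rw [hv14]; exact m0)
    · exact (show v20 15 ∈ lunaSlice from by rw [hv15]; exact m1)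
    · exact (show v20 16 ∈ lunaSlice from by rw [hv16]; exact m2)
    · exact (show v20 17 ∈ lunaSlice from by rw [hv17]; exact m3)
    · exact (show v20 18 ∈ lunaSlice from by rw [hv18]; exact m4)
    · exact (show v20 19 ∈ lunaSlice from by rw [hv19]; exact m5)

lemma prodHomog (g : Fin 4 → ℕ) :
    ((X 0 ^ g 0 * X 1 ^ g 1 * X 2 ^ g 2 * X 3 ^ g 3 : MvPolynomial (Fin 4) ℂ)).IsHomogeneous
      (g 0 + g 1 + g 2 + g 3) := by
  have h := ((((isHomogeneous_X ℂ (0:Fin 4)).pow (g 0)).mul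
    ((isHomogeneous_X ℂ (1:Fin 4)).pow (g 1))).mul
    ((isHomogeneous_X ℂ (2:Fin 4)).pow (g 2))).mul
    ((isHomogeneous_X ℂ (3:Fin 4)).pow (g 3))
  simpa using h

lemma e20sum : ∀ i, e20 i 0 + e20 i 1 + e20 i 2 + e20 i 3 = 3 := by decide

lemma mono_mem (d : Fin 4 →₀ ℕ) (hd : d 0 + d 1 + d 2 + d 3 = 3) :
    (monomial d 1 : MvPolynomial (Fin 4) ℂ) ∈ Submodule.span ℂ (Set.range v20) := by
  have hrw : (monomial d (1:ℂ)) = X 0 ^ d 0 * X 1 ^ d 1 * X 2 ^ d 2 * X 3 ^ d 3 := by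
    rw [← monomial_prod ⇑d, Finsupp.equivFunOnFinite_symm_coe]
  rw [hrw]
  have mem : ∀ k : Fin 20, ∀ a b c e : ℕ, e20 k = ![a, b, c, e] →
      (X 0 ^ a * X 1 ^ b * X 2 ^ c * X 3 ^ e :
      MvPolynomial (Fin 4) ℂ) ∈ Submodule.span ℂ (Set.range v20) :=
    fun k a b c e h => Submodule.subset_span ⟨k, by
      rw [v20_eq k h]; simp [Matrix.cons_val_two, Matrix.cons_val_three]⟩
  have h0 : d 0 ≤ 3 := by omega
  have h1 : d 1 ≤ 3 := by omega
  have h2 : d 2 ≤ 3 := by omega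
  have h3 : d 3 ≤ 3 := by omega
  interval_cases h : (d 0) <;> interval_cases h' : (d 1) <;> interval_cases h'' : (d 2) <;>
    interval_cases h''' : (d 3) <;>
    first
      | omega
      | exact mem 0 _ _ _ _ (by decide) | exact mem 1 _ _ _ _ (by decide) | exact mem 2 _ _ _ _ (by decide) | exact mem 3 _ _ _ _ (by decide) | exact mem 4 _ _ _ _ (by decide)
      | exact mem 5 _ _ _ _ (by decide) | exact mem 6 _ _ _ _ (by decide) | exact mem 7 _ _ _ _ (by decide) | exact mem 8 _ _ _ _ (by decide) | exact mem 9 _ _ _ _ (by decide)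
      | exact mem 10 _ _ _ _ (by decide) | exact mem 11 _ _ _ _ (by decide) | exact mem 12 _ _ _ _ (by decide) | exact mem 13 _ _ _ _ (by decide) | exact mem 14 _ _ _ _ (by decide)
      | exact mem 15 _ _ _ _ (by decide) | exact mem 16 _ _ _ _ (by decide) | exact mem 17 _ _ _ _ (by decide) | exact mem 18 _ _ _ _ (by decide) | exact mem 19 _ _ _ _ (by decide)

lemma hU : Submodule.span ℂ (Set.range v20) = MvPolynomial.homogeneousSubmodule (Fin 4) ℂ 3 := by
  apply le_antisymm
  · rw [Submodule.span_le]
    rintro p ⟨i, rfl⟩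
    simp only [SetLike.mem_coe, mem_homogeneousSubmodule]
    rw [v20_raw i]
    have hph := prodHomog (e20 i)
    rw [e20sum i] at hph
    exact hph
  · intro p hp
    have hh := (mem_homogeneousSubmodule _ _).mp hp
    rw [p.as_sum]
    refine Submodule.sum_mem _ fun d hd => ?_
    have hdeg : d 0 + d 1 + d 2 + d 3 = 3 := by
      have h1 : (Finsupp.weight 1) d = 3 := hh (mem_support_iff.mp hd)
      have h2 : Finsupp.degree d = 3 := by rw [Finsupp.degree_eq_weight_one]; exact_mod_cast h1
      have h4 : ∑ i : Fin 4, d i = 3 := by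
        rw [← h2, Finsupp.degree]
        exact (Finset.sum_subset (Finset.subset_univ _)
          (fun x _ hx => Finsupp.notMem_support_iff.mp hx)).symm
      simpa [Fin.sum_univ_four] using h4
    have hms : monomial d (coeff d p) = (coeff d p) • (monomial d (1:ℂ)) := by
      rw [smul_monomial, smul_eq_mul, mul_one]
    rw [hms]
    exact Submodule.smul_mem _ _ (mono_mem d hdeg)

/-- The 20-dimensional space V of homogeneous cubic forms in x₀,...,x₃ is the internal
direct sum of the 14-dimensional span S of the 16 polynomials xᵢ·∂F/∂xⱼ and the
6-dimensional Luna slice W spanned by x₀³, x₁³, x₂³, x₀²x₃, x₁²x₃, x₂²x₃. -/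
theorem luna_slice_complement :
    orbitTangent ⊔ lunaSlice = MvPolynomial.homogeneousSubmodule (Fin 4) ℂ 3 ∧
    Disjoint orbitTangent lunaSlice ∧
    Module.finrank ℂ orbitTangent = 14 ∧
    Module.finrank ℂ lunaSlice = 6 := by
  have hdisj : Disjoint sIdx tIdx := by
    rw [Set.disjoint_left]
    intro a ha hb
    simp only [sIdx, tIdx, Set.mem_setOf_eq] at ha hb
    omega
  have hun : sIdx ∪ tIdx = Set.univ := by
    ext i
    simp only [sIdx, tIdx, Set.mem_union, Set.mem_setOf_eq, Set.mem_univ, iff_true]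
    omega
  have hsup : orbitTangent ⊔ lunaSlice = Submodule.span ℂ (Set.range v20) := by
    rw [hS, hW, ← Submodule.span_union, ← Set.image_union, hun, Set.image_univ]
  refine ⟨by rw [hsup, hU], ?_, ?_, ?_⟩
  · rw [hS, hW]
    exact v20_li.disjoint_span_image hdisj
  · have him : v20 '' sIdx = Set.range (v20 ∘ Fin.castLE (by norm_num : 14 ≤ 20)) := by
      rw [Set.range_comp, Fin.range_castLE]; rfl
    rw [hS, him, finrank_span_eq_card (v20_li.comp _ (Fin.castLE_injective _))]
    simp
  · set g6 : Fin 6 → Fin 20 := fun j => ⟨14 + j, by omega⟩ with hg6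
    have hg6r : Set.range g6 = tIdx := by
      ext i
      simp only [tIdx, Set.mem_range, Set.mem_setOf_eq, hg6]
      constructor
      · rintro ⟨j, rfl⟩; simp
      · intro h; exact ⟨⟨i - 14, by omega⟩, by apply Fin.ext; simp; omega⟩
    have hg6i : Function.Injective g6 := by
      intro a b h
      have := congrArg Fin.val h
      simp [hg6] at this
      exact Fin.ext (by omega)
    have him : v20 '' tIdx = Set.range (v20 ∘ g6) := by
      rw [Set.range_comp, hg6r]
    rw [hW, him, finrank_span_eq_card (v20_li.comp _ hg6i)]
    simp
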